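/- Suppose u is a symmetric function on finite tuples of nonnegative reals satisfying: u(∅) = 0, u(0, x₂, …, x_k) = u(x₂, …, x_k), and the history-independence property u(x_S, x̄, x) - u(x_S, x̄, 0) = u(x_S, x̲, x) - u(x_S, x̲, 0) whenever x ≤ x̲ < x̄ (Assumption 2). Define g_ℓ(x) = u(x, …, x) (ℓ copies) and f_ℓ(x) = g_ℓ(x) - g_{ℓ-1}(x). Then for every tuple with ordered entries x₁ ≥ x₂ ≥ ⋯ ≥ x_k, u(x₁, …, x_k) = Σ_{ℓ=1}^{k} f_ℓ(x_ℓ). -/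

import Mathlib

open scoped NNReal

/-- `u` is symmetric: invariant under permutations of its arguments. -/
def IsSymmU (u : List ℝ≥0 → ℝ) : Prop := ∀ l l' : List ℝ≥0, l.Perm l' → u l = u l'

/-- `u` is nondecreasing in each argument. -/
def IsMonoU (u : List ℝ≥0 → ℝ) : Prop :=
  ∀ l l' : List ℝ≥0, List.Forall₂ (· ≤ ·) l l' → u l ≤ u l'

/-- `u` is submodular: `u(x∧y)+u(x∨y) ≤ u(x)+u(y)` for equal-length tuples. -/
def IsSubmodU (u : List ℝ≥0 → ℝ) : Prop := ∀ l l' : List ℝ≥0, l.length = l'.length →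
  u (List.zipWith min l l') + u (List.zipWith max l l') ≤ u l + u l'

/-- `u` is continuous on tuples of each fixed length. -/
def IsContU (u : List ℝ≥0 → ℝ) : Prop :=
  ∀ n : ℕ, Continuous (fun v : Fin n → ℝ≥0 => u (List.ofFn v))

/-- Assumption 1: `u(∅)=0`, prepending a zero leaves `u` unchanged, `u` nonnegative,
continuous, symmetric, nondecreasing and submodular. -/
def Assumption1 (u : List ℝ≥0 → ℝ) : Prop :=
  u [] = 0 ∧ (∀ l, u (0 :: l) = u l) ∧ (∀ l, 0 ≤ u l) ∧
    IsContU u ∧ IsSymmU u ∧ IsMonoU u ∧ IsSubmodU u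

/-- Assumption 2: the benefit of raising an argument from `0` to `xi` does not
depend on the values of other arguments exceeding `xi`. -/
def Assumption2 (u : List ℝ≥0 → ℝ) : Prop :=
  ∀ (l : List ℝ≥0) (xi xlo xhi : ℝ≥0), xi ≤ xlo → xlo < xhi →
    u (l ++ [xhi, xi]) - u (l ++ [xhi, 0]) = u (l ++ [xlo, xi]) - u (l ++ [xlo, 0])


private lemma stmt_4_aux (u : List ℝ≥0 → ℝ)
    (hsym : ∀ l l' : List ℝ≥0, l.Perm l' → u l = u l')
    (hzero : ∀ l, u (0 :: l) = u l)
    (hA2 : ∀ (l : List ℝ≥0) (xi xlo xhi : ℝ≥0), xi ≤ xlo → xlo < xhi →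
      u (l ++ [xhi, xi]) - u (l ++ [xhi, 0]) = u (l ++ [xlo, xi]) - u (l ++ [xlo, 0])) :
    ∀ (m : List ℝ≥0) (n : ℕ) (x : ℝ≥0), (∀ y ∈ m, x ≤ y) →
      u (m ++ List.replicate n x ++ [x]) - u (m ++ List.replicate n x)
        = u (List.replicate (m.length + n) x ++ [x]) - u (List.replicate (m.length + n) x) := by
  have hms : ∀ l l' : List ℝ≥0, (↑l : Multiset ℝ≥0) = ↑l' → u l = u l' := by
    intro l l' h
    exact hsym l l' (Multiset.coe_eq_coe.mp h)
  have hdz : ∀ l : List ℝ≥0, u (l ++ [0]) = u l := by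
    intro l
    rw [hms (l ++ [0]) (0 :: l) (by
      simp [← Multiset.coe_add, ← Multiset.cons_coe, ← Multiset.singleton_add]; abel), hzero]
  intro m
  induction m with
  | nil => intro n x _; simp
  | cons y m' ih =>
    intro n x hx
    have hxy : x ≤ y := hx y (by simp)
    have hx' : ∀ z ∈ m', x ≤ z := fun z hz => hx z (by simp [hz])
    have key : u ((y :: m') ++ List.replicate n x ++ [x]) - u ((y :: m') ++ List.replicate n x)
        = u (m' ++ List.replicate (n + 1) x ++ [x]) - u (m' ++ List.replicate (n + 1) x) := by
      have p1 : u ((y :: m') ++ List.replicate n x ++ [x])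
          = u ((m' ++ List.replicate n x) ++ [y, x]) := by
        apply hms
        simp [← Multiset.coe_add, ← Multiset.cons_coe, ← Multiset.singleton_add]; abel
      have p2 : u ((y :: m') ++ List.replicate n x)
          = u ((m' ++ List.replicate n x) ++ [y, 0]) := by
        rw [show ((m' ++ List.replicate n x) ++ [y, 0] : List ℝ≥0)
            = ((m' ++ List.replicate n x) ++ [y]) ++ [0] by simp, hdz]
        apply hms
        simp [← Multiset.coe_add, ← Multiset.cons_coe, ← Multiset.singleton_add]; abel
      have p3 : u (m' ++ List.replicate (n + 1) x ++ [x])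
          = u ((m' ++ List.replicate n x) ++ [x, x]) := by
        apply hms
        simp [← Multiset.coe_add, ← Multiset.cons_coe, ← Multiset.singleton_add,
          List.replicate_succ]; abel
      have p4 : u (m' ++ List.replicate (n + 1) x)
          = u ((m' ++ List.replicate n x) ++ [x, 0]) := by
        rw [show ((m' ++ List.replicate n x) ++ [x, 0] : List ℝ≥0)
            = ((m' ++ List.replicate n x) ++ [x]) ++ [0] by simp, hdz]
        apply hms
        simp [← Multiset.coe_add, ← Multiset.cons_coe, ← Multiset.singleton_add,
          List.replicate_succ]; abel
      rw [p1, p2, p3, p4]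
      rcases eq_or_lt_of_le hxy with h | h
      · subst h; ring
      · exact hA2 (m' ++ List.replicate n x) x x y le_rfl h
    rw [key, ih (n + 1) x hx']
    congr 2 <;> simp <;> omega

/-- Lemma 2(a): under symmetry, `u(∅)=0`, zero-absorption and Assumption 2,
`u` decomposes on decreasingly ordered tuples as `u(x₁,…,x_k) = Σ_ℓ f_ℓ(x_ℓ)`
where `f_ℓ(x) = u(x,…,x) (ℓ times) - u(x,…,x) (ℓ-1 times)`. -/
theorem stmt_4 (u : List ℝ≥0 → ℝ)
    (hsym : IsSymmU u) (hempty : u [] = 0) (hzero : ∀ l, u (0 :: l) = u l)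
    (hA2 : Assumption2 u)
    (l : List ℝ≥0) (hl : l.Pairwise (· ≥ ·)) :
    u l = ∑ i : Fin l.length,
      (u (List.replicate (i.1 + 1) (l.get i)) - u (List.replicate i.1 (l.get i))) := by
  have aux := stmt_4_aux u hsym hzero hA2
  have main : ∀ l : List ℝ≥0, l.Pairwise (· ≥ ·) →
      u l = ∑ i ∈ Finset.range l.length,
        (u (List.replicate (i + 1) (l.getD i 0)) - u (List.replicate i (l.getD i 0))) := by
    intro l
    induction l using List.reverseRecOn with
    | nil => intro _; simp [hempty]
    | append_singleton m x ih =>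
      intro hs
      rw [List.pairwise_append] at hs
      obtain ⟨hm, _, hle⟩ := hs
      have hxm : ∀ y ∈ m, x ≤ y := fun y hy => hle y hy x (by simp)
      have h0 := aux m 0 x hxm
      simp only [List.replicate_zero, List.append_nil, Nat.add_zero] at h0
      have hrep : List.replicate m.length x ++ [x] = List.replicate (m.length + 1) x :=
        (List.replicate_succ' (n := m.length) (a := x)).symm
      rw [hrep] at h0
      have hlen : (m ++ [x]).length = m.length + 1 := by simp
      rw [hlen, Finset.sum_range_succ]
      have hgd : ∀ i ∈ Finset.range m.length, (m ++ [x]).getD i 0 = m.getD i 0 := by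
        intro i hi
        rw [Finset.mem_range] at hi
        rw [List.getD_eq_getElem _ _ (by simp; omega), List.getD_eq_getElem _ _ hi,
          List.getElem_append_left hi]
      have hgdl : (m ++ [x]).getD m.length 0 = x := by
        rw [List.getD_eq_getElem _ _ (by simp)]
        simp
      rw [Finset.sum_congr rfl (fun i hi => by rw [hgd i hi]), ← ih hm, hgdl]
      linarith
  rw [main l hl]
  rw [Finset.sum_range fun i => _]
  apply Finset.sum_congr rfl
  intro i _
  congr 1 <;> rw [List.getD_eq_getElem _ _ i.2] <;> rfl
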